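/- Suppose n ≡ 2 (mod 12). Then A(n) is odd if and only if n = 2m^2 for some integer m with gcd(m, 6) = 1. -/

import Mathlib

/-- `A(n)`: the number of triples `(x, y, z) ∈ ℤ³` with
`(6x+1)² + (6y+1)² + 12z² = n`. -/
noncomputable def A (n : ℕ) : ℕ :=
  Nat.card {t : ℤ × ℤ × ℤ //
    (6 * t.1 + 1) ^ 2 + (6 * t.2.1 + 1) ^ 2 + 12 * t.2.2 ^ 2 = (n : ℤ)}

private lemma aux_nonneg (x : ℤ) : 0 ≤ x * (x + 1) := by
  rcases le_or_gt 0 x with h | h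
  · exact mul_nonneg h (by linarith)
  · have hx : x + 1 ≤ 0 := by omega
    nlinarith

/-- The solution set is finite. -/
private lemma finite_T (n : ℕ) : Finite {t : ℤ × ℤ × ℤ //
    (6 * t.1 + 1) ^ 2 + (6 * t.2.1 + 1) ^ 2 + 12 * t.2.2 ^ 2 = (n : ℤ)} := by
  have hsub : {t : ℤ × ℤ × ℤ |
      (6 * t.1 + 1) ^ 2 + (6 * t.2.1 + 1) ^ 2 + 12 * t.2.2 ^ 2 = (n : ℤ)} ⊆
      (Set.Icc (-(n:ℤ)) n ×ˢ Set.Icc (-(n:ℤ)) n ×ˢ Set.Icc (-(n:ℤ)) n) := by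
    rintro ⟨x, y, z⟩ h
    simp only [Set.mem_setOf_eq] at h
    have h1 := aux_nonneg x
    have h2 := aux_nonneg (-x)
    have h3 := aux_nonneg y
    have h4 := aux_nonneg (-y)
    have h5 := aux_nonneg z
    have h6 := aux_nonneg (-z)
    refine ⟨⟨?_, ?_⟩, ⟨?_, ?_⟩, ⟨?_, ?_⟩⟩ <;>
      nlinarith [sq_nonneg (6*x+1), sq_nonneg (6*y+1), sq_nonneg z]
  exact (((Set.finite_Icc _ _).prod ((Set.finite_Icc _ _).prod
    (Set.finite_Icc _ _))).subset hsub).to_subtype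

theorem A_odd_iff (n : ℕ) (hn : n % 12 = 2) :
    Odd (A n) ↔ ∃ m : ℤ, (n : ℤ) = 2 * m ^ 2 ∧ Int.gcd m 6 = 1 := by
  classical
  have hfin := finite_T n
  letI : Fintype {t : ℤ × ℤ × ℤ //
      (6 * t.1 + 1) ^ 2 + (6 * t.2.1 + 1) ^ 2 + 12 * t.2.2 ^ 2 = (n : ℤ)} :=
    Fintype.ofFinite _
  set T := {t : ℤ × ℤ × ℤ //
      (6 * t.1 + 1) ^ 2 + (6 * t.2.1 + 1) ^ 2 + 12 * t.2.2 ^ 2 = (n : ℤ)} with hT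
  -- the involution
  let g : Function.End T := fun t =>
    ⟨(t.1.2.1, t.1.1, -t.1.2.2), by linear_combination t.2⟩
  have hg2 : g ^ 2 ^ 1 = 1 := by
    funext t
    show g (g t) = t
    apply Subtype.ext
    obtain ⟨⟨x, y, z⟩, h⟩ := t
    simp [g]
  have hmod := Equiv.Perm.card_fixedPoints_modEq (p := 2) (n := 1) hg2
  -- uniqueness of the fixed point
  have key : ∀ a b : ℤ, 2 * (6 * a + 1) ^ 2 = (n : ℤ) →
      2 * (6 * b + 1) ^ 2 = (n : ℤ) → a = b := by
    intro a b ha hb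
    have h0 : (12 * a - 12 * b) * (6 * a + 6 * b + 2) = 0 := by linear_combination ha - hb
    rcases mul_eq_zero.mp h0 with h | h <;> omega
  -- fixed points correspond to x with 2*(6x+1)^2 = n
  have hfix_iff : ∀ t : T, t ∈ Function.fixedPoints g ↔
      t.1.2.1 = t.1.1 ∧ t.1.2.2 = 0 := by
    rintro ⟨⟨x, y, z⟩, h⟩
    constructor
    · intro hfx
      have := congrArg Subtype.val hfx
      simp only [g] at this
      simp only [Prod.mk.injEq] at this
      obtain ⟨h1, h2, h3⟩ := this
      exact ⟨h1, show z = 0 by omega⟩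
    · rintro ⟨h1, h2⟩
      simp only at h1 h2
      apply Subtype.ext
      simp only [g, Prod.mk.injEq]
      exact ⟨h1, h1.symm, by omega⟩
  have hne : Nonempty (Function.fixedPoints g) ↔
      ∃ x : ℤ, 2 * (6 * x + 1) ^ 2 = (n : ℤ) := by
    constructor
    · rintro ⟨⟨⟨⟨x, y, z⟩, h⟩, hfx⟩⟩
      obtain ⟨h1, h2⟩ := (hfix_iff _).mp hfx
      simp only at h1 h2 h
      exact ⟨x, by linear_combination h - (36*x+36*y+12) * h1 - 12*z * h2⟩
    · rintro ⟨x, hx⟩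
      exact ⟨⟨⟨(x, x, 0), by linear_combination hx⟩, (hfix_iff _).mpr ⟨rfl, rfl⟩⟩⟩
  have hsub : Subsingleton (Function.fixedPoints g) := by
    constructor
    rintro ⟨⟨⟨x, y, z⟩, h⟩, hfx⟩ ⟨⟨⟨x', y', z'⟩, h'⟩, hfx'⟩
    obtain ⟨h1, h2⟩ := (hfix_iff _).mp hfx
    obtain ⟨h1', h2'⟩ := (hfix_iff _).mp hfx'
    simp only at h1 h2 h1' h2' h h'
    have hx : 2 * (6 * x + 1) ^ 2 = (n : ℤ) := by
      linear_combination h - (36*x+36*y+12) * h1 - 12*z * h2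
    have hx' : 2 * (6 * x' + 1) ^ 2 = (n : ℤ) := by
      linear_combination h' - (36*x'+36*y'+12) * h1' - 12*z' * h2'
    have hxx : x = x' := key _ _ hx hx'
    apply Subtype.ext
    apply Subtype.ext
    simp only [Prod.mk.injEq]
    omega
  -- parity of the fixed point set
  have hcard_le : Fintype.card (Function.fixedPoints g) ≤ 1 :=
    Fintype.card_le_one_iff_subsingleton.mpr hsub
  have hAodd : Odd (A n) ↔ Odd (Fintype.card (Function.fixedPoints g)) := by
    have hA : A n = Fintype.card T := by
      rw [A, ← hT, Nat.card_eq_fintype_card]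
    rw [hA, Nat.odd_iff, Nat.odd_iff, hmod]
  rw [hAodd]
  have hfp_odd : Odd (Fintype.card (Function.fixedPoints g)) ↔
      Nonempty (Function.fixedPoints g) := by
    rw [← Fintype.card_pos_iff]
    constructor
    · intro hodd
      rcases hodd with ⟨k, hk⟩
      omega
    · intro hpos
      have : Fintype.card (Function.fixedPoints g) = 1 := by omega
      rw [this]; exact odd_one
  rw [hfp_odd, hne]
  constructor
  · rintro ⟨x, hx⟩
    refine ⟨6 * x + 1, hx.symm, ?_⟩
    exact Int.isCoprime_iff_gcd_eq_one.mp ⟨1, -x, by ring⟩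
  · rintro ⟨m, hm, hgcd⟩
    have h2 : ¬ (2 : ℤ) ∣ m := by
      intro hd
      have : (2 : ℤ) ∣ (Int.gcd m 6 : ℤ) := Int.dvd_coe_gcd hd (by norm_num)
      rw [hgcd] at this
      norm_num at this
    have h3 : ¬ (3 : ℤ) ∣ m := by
      intro hd
      have : (3 : ℤ) ∣ (Int.gcd m 6 : ℤ) := Int.dvd_coe_gcd hd (by norm_num)
      rw [hgcd] at this
      norm_num at this
    have hmod6 : m % 6 = 1 ∨ m % 6 = 5 := by omega
    rcases hmod6 with h | h
    · obtain ⟨x, hx⟩ : ∃ x : ℤ, m = 6 * x + 1 := ⟨(m - 1) / 6, by omega⟩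
      exact ⟨x, by rw [← hx]; linarith [hm]⟩
    · obtain ⟨x, hx⟩ : ∃ x : ℤ, m = -(6 * x + 1) := ⟨(-m - 1) / 6, by omega⟩
      refine ⟨x, ?_⟩
      rw [hm, hx]; ring
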